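/- arXiv:math/0510050 — 4 statements merged into one kernel-verified Lean document; each statement's English description precedes it below -/
import Mathlib

section
/- For every t ∈ ℝ and z ∈ ℂ with Ω(z)·|t| < 1, the Kapteyn series ∑_{n=1}^∞ t^n · J_n(n·z) is summable. -/
open Complex MeasureTheory intervalIntegral Real
open scoped ENNReal NNReal

/-- The Bessel function of the first kind of (integer) order `n`,
defined by its everywhere-convergent power series. -/
noncomputable def besselJ (n : ℕ) (z : ℂ) : ℂ :=
  ∑' j : ℕ, ((-1 : ℂ) ^ j / ((Nat.factorial j : ℂ) * (Nat.factorial (n + j) : ℂ))) *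
    (z / 2) ^ (n + 2 * j)

/-- `Ω(z) = |z exp(√(1−z²)) / (1 + √(1−z²))|`, with the principal square root. -/
noncomputable def Omega (z : ℂ) : ℝ :=
  ‖z * Complex.exp ((1 - z ^ 2) ^ (1 / 2 : ℂ)) / (1 + (1 - z ^ 2) ^ (1 / 2 : ℂ))‖

lemma cexp_tsum (x : ℂ) : Complex.exp x = ∑' p : ℕ, x ^ p / (Nat.factorial p) := by
  rw [Complex.exp_eq_exp_ℂ, NormedSpace.exp_eq_tsum_div]

lemma norm_pow_div_fact (x : ℂ) (p : ℕ) :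
    ‖x ^ p / (Nat.factorial p : ℂ)‖ = ‖x‖ ^ p / (Nat.factorial p) := by
  rw [norm_div, norm_pow]
  simp

lemma besselJ_integral (n : ℕ) (w : ℂ) (r : ℝ) (hr : 0 < r) :
    (∫ θ in (0:ℝ)..(2*Real.pi),
      Complex.exp ((w*r/2) * Complex.exp (θ*Complex.I)) *
      Complex.exp (-(w/(2*r)) * Complex.exp (-(θ*Complex.I))) *
      Complex.exp (-(n:ℂ) * (θ*Complex.I)))
    = 2*Real.pi * (r:ℂ)^n * besselJ n w := by
  have hrC : (r : ℂ) ≠ 0 := by exact_mod_cast hr.ne'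
  set c : ℕ → ℂ := fun p => (w*r/2)^p / (Nat.factorial p) with hc_def
  set d : ℕ → ℂ := fun q => (-(w/(2*r)))^q / (Nat.factorial q) with hd_def
  have hc : Summable fun p => ‖c p‖ := by
    simpa [hc_def, norm_pow_div_fact] using Real.summable_pow_div_factorial ‖w*r/2‖
  have hd : Summable fun q => ‖d q‖ := by
    simpa [hd_def, norm_pow_div_fact] using Real.summable_pow_div_factorial ‖-(w/(2*r))‖
  set F : ℕ × ℕ → ℝ → ℂ := fun pq θ =>
    c pq.1 * d pq.2 * Complex.exp (((pq.1:ℂ) - pq.2 - n) * (θ*Complex.I)) with hF_def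
  have hpt : ∀ θ : ℝ,
      Complex.exp ((w*r/2) * Complex.exp (θ*Complex.I)) *
      Complex.exp (-(w/(2*r)) * Complex.exp (-(θ*Complex.I))) *
      Complex.exp (-(n:ℂ) * (θ*Complex.I)) = ∑' pq : ℕ × ℕ, F pq θ := by
    intro θ
    have h1 : Complex.exp ((w*r/2) * Complex.exp (θ*Complex.I)) =
        ∑' p : ℕ, c p * Complex.exp ((p:ℂ) * (θ*Complex.I)) := by
      rw [cexp_tsum]
      congr 1; ext p
      rw [mul_pow, Complex.exp_nat_mul]
      simp [hc_def]; ring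
    have h2 : Complex.exp (-(w/(2*r)) * Complex.exp (-(θ*Complex.I))) =
        ∑' q : ℕ, d q * Complex.exp (-(q:ℂ) * (θ*Complex.I)) := by
      rw [cexp_tsum]
      congr 1; ext q
      rw [mul_pow, ← Complex.exp_nat_mul]
      have : (q:ℂ) * -(θ*Complex.I) = -(q:ℂ) * (θ*Complex.I) := by ring
      rw [this]
      simp [hd_def]; ring
    have hc' : Summable fun p => ‖c p * Complex.exp ((p:ℂ) * (θ*Complex.I))‖ := by
      have h : ∀ p : ℕ, ‖c p * Complex.exp ((p:ℂ) * (θ*Complex.I))‖ = ‖c p‖ := by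
        intro p
        rw [norm_mul, Complex.norm_exp]
        simp
      exact hc.congr fun p => (h p).symm
    have hd' : Summable fun q => ‖d q * Complex.exp (-(q:ℂ) * (θ*Complex.I))‖ := by
      have h : ∀ q : ℕ, ‖d q * Complex.exp (-(q:ℂ) * (θ*Complex.I))‖ = ‖d q‖ := by
        intro q
        rw [norm_mul, Complex.norm_exp]
        simp
      exact hd.congr fun q => (h q).symm
    rw [h1, h2, tsum_mul_tsum_of_summable_norm hc' hd', ← tsum_mul_right]
    congr 1; ext pq
    have hE : Complex.exp (((pq.1:ℂ) - pq.2 - n) * (θ*Complex.I)) =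
        Complex.exp ((pq.1:ℂ)*(θ*Complex.I)) * Complex.exp (-(pq.2:ℂ)*(θ*Complex.I)) *
        Complex.exp (-(n:ℂ)*(θ*Complex.I)) := by
      rw [← Complex.exp_add, ← Complex.exp_add]; congr 1; ring
    simp only [hF_def, hE]
    ring
  have h0le : (0:ℝ) ≤ 2*Real.pi := by positivity
  have hfac : ∀ m : ℕ, ((Nat.factorial m : ℂ)) ≠ 0 :=
    fun m => Nat.cast_ne_zero.mpr (Nat.factorial_ne_zero m)
  have hmeas : ∀ pq : ℕ×ℕ, AEStronglyMeasurable (F pq)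
      (volume.restrict (Set.Ioc (0:ℝ) (2*Real.pi))) := by
    intro pq
    apply Continuous.aestronglyMeasurable
    exact continuous_const.mul (Complex.continuous_exp.comp
      (continuous_const.mul (Complex.continuous_ofReal.mul continuous_const)))
  have hFnorm : ∀ (pq : ℕ×ℕ) (θ : ℝ), ‖F pq θ‖ = ‖c pq.1‖ * ‖d pq.2‖ := by
    intro pq θ
    rw [hF_def]
    simp only
    rw [norm_mul, norm_mul, Complex.norm_exp]
    simp
  have hsum : Summable (fun pq : ℕ×ℕ => ‖c pq.1‖ * ‖d pq.2‖) := by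
    apply summable_mul_of_summable_norm (f := fun p => ‖c p‖) (g := fun q => ‖d q‖)
    · simpa using hc
    · simpa using hd
  have key : (∫ θ in Set.Ioc (0:ℝ) (2*Real.pi), ∑' pq : ℕ×ℕ, F pq θ) =
      ∑' pq : ℕ×ℕ, ∫ θ in Set.Ioc (0:ℝ) (2*Real.pi), F pq θ := by
    apply MeasureTheory.integral_tsum hmeas
    have hlin : ∀ pq : ℕ×ℕ, (∫⁻ θ in Set.Ioc (0:ℝ) (2*Real.pi), (‖F pq θ‖₊ : ℝ≥0∞)) =
        (‖c pq.1‖₊ * ‖d pq.2‖₊ : ℝ≥0∞) * ENNReal.ofReal (2*Real.pi) := by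
      intro pq
      have : (fun θ : ℝ => (‖F pq θ‖₊ : ℝ≥0∞)) = fun _ => (‖c pq.1‖₊ * ‖d pq.2‖₊ : ℝ≥0∞) := by
        ext θ
        have := hFnorm pq θ
        have h2 : ‖F pq θ‖₊ = ‖c pq.1‖₊ * ‖d pq.2‖₊ := by
          ext
          simpa using this
        rw [h2]
        push_cast
        ring
      rw [this, MeasureTheory.setLIntegral_const, Real.volume_Ioc]
      norm_num
    have : ∑' pq : ℕ×ℕ, (∫⁻ θ in Set.Ioc (0:ℝ) (2*Real.pi), (‖F pq θ‖₊ : ℝ≥0∞)) =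
        (∑' pq : ℕ×ℕ, ((‖c pq.1‖₊ * ‖d pq.2‖₊ : ℝ≥0) : ℝ≥0∞)) * ENNReal.ofReal (2*Real.pi) := by
      rw [← ENNReal.tsum_mul_right]
      apply tsum_congr
      intro pq
      rw [hlin pq]
      push_cast
      ring
    simp only [enorm_eq_nnnorm]
    rw [this]
    apply ENNReal.mul_ne_top _ ENNReal.ofReal_ne_top
    rw [ENNReal.tsum_coe_ne_top_iff_summable]
    rw [← NNReal.summable_coe]
    simpa using hsum
  have hint : ∀ pq : ℕ×ℕ, (∫ θ in Set.Ioc (0:ℝ) (2*Real.pi), F pq θ) =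
      if pq.1 = pq.2 + n then (2*Real.pi : ℂ) * (c pq.1 * d pq.2) else 0 := by
    intro pq
    rw [← intervalIntegral.integral_of_le h0le]
    set m : ℤ := (pq.1 : ℤ) - pq.2 - n with hm_def
    have hFm : ∀ θ : ℝ, F pq θ = c pq.1 * d pq.2 * Complex.exp (((m:ℂ) * Complex.I) * θ) := by
      intro θ
      have harg : ((pq.1:ℂ) - pq.2 - n) * ((θ:ℂ)*Complex.I) = ((m:ℂ) * Complex.I) * θ := by
        rw [hm_def]
        push_cast
        ring
      rw [hF_def]
      simp only
      rw [harg]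
    rw [intervalIntegral.integral_congr (fun θ _ => hFm θ),
      intervalIntegral.integral_const_mul]
    rcases eq_or_ne m 0 with hm | hm
    · have hpqn : pq.1 = pq.2 + n := by omega
      rw [if_pos hpqn]
      simp only [hm, Int.cast_zero, zero_mul]
      simp [Complex.exp_zero]
      ring
    · have hpqn : ¬ (pq.1 = pq.2 + n) := by omega
      rw [if_neg hpqn]
      have hmI : (m:ℂ) * Complex.I ≠ 0 :=
        mul_ne_zero (Int.cast_ne_zero.mpr hm) Complex.I_ne_zero
      rw [integral_exp_mul_complex hmI]
      have h1 : (m:ℂ) * Complex.I * (2*Real.pi : ℝ) = (m:ℂ) * (2 * Real.pi * Complex.I) := by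
        push_cast
        ring
      rw [h1, Complex.exp_int_mul_two_pi_mul_I]
      simp
  have hreindex : (∑' pq : ℕ×ℕ, if pq.1 = pq.2 + n then (2*Real.pi : ℂ) * (c pq.1 * d pq.2) else 0)
      = 2*Real.pi * (r:ℂ)^n * besselJ n w := by
    have hinj : Function.Injective (fun q : ℕ => ((q + n, q) : ℕ × ℕ)) := by
      intro a b hab
      simpa using (congrArg Prod.snd hab)
    have hsupp : Function.support (fun pq : ℕ×ℕ =>
        if pq.1 = pq.2 + n then (2*Real.pi : ℂ) * (c pq.1 * d pq.2) else 0) ⊆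
        Set.range (fun q : ℕ => ((q + n, q) : ℕ × ℕ)) := by
      intro pq hpq
      simp only [Function.mem_support] at hpq
      by_cases h : pq.1 = pq.2 + n
      · exact ⟨pq.2, by simp [← h]⟩
      · exact absurd (if_neg h) hpq
    rw [← Function.Injective.tsum_eq hinj hsupp]
    rw [besselJ, ← tsum_mul_left]
    apply tsum_congr
    intro q
    have hcond : ((fun q : ℕ => ((q + n, q) : ℕ × ℕ)) q).1 = ((fun q : ℕ => ((q + n, q) : ℕ × ℕ)) q).2 + n := rfl
    rw [if_pos hcond]
    have hterm : c (q + n) * d q =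
        (r:ℂ)^n * (((-1 : ℂ) ^ q / ((Nat.factorial q : ℂ) * (Nat.factorial (n + q) : ℂ))) *
          (w / 2) ^ (n + 2 * q)) := by
      rw [hc_def, hd_def]
      simp only
      set X : ℂ := w / 2 with hX
      have e1 : (w * (r:ℂ) / 2) ^ (q + n) = X^(q+n) * (r:ℂ)^(q+n) := by
        rw [← mul_pow, hX]
        ring_nf
      have e2 : (-(w / (2 * (r:ℂ))))^q = (-1:ℂ)^q * (X^q / (r:ℂ)^q) := by
        rw [neg_pow, ← div_pow, hX]
        ring_nf
      have e3 : X^(n+2*q) = X^(q+n) * X^q := by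
        rw [← pow_add]
        congr 1
        omega
      have e4 : (n + q) = (q + n) := Nat.add_comm n q
      rw [e1, e2, pow_add (r:ℂ) q n, e3, e4]
      have hrq : ((r:ℂ))^q ≠ 0 := pow_ne_zero q hrC
      field_simp [hfac]
    rw [hterm]
    ring
  calc (∫ θ in (0:ℝ)..(2*Real.pi),
      Complex.exp ((w*r/2) * Complex.exp (θ*Complex.I)) *
      Complex.exp (-(w/(2*r)) * Complex.exp (-(θ*Complex.I))) *
      Complex.exp (-(n:ℂ) * (θ*Complex.I)))
      = ∫ θ in (0:ℝ)..(2*Real.pi), ∑' pq : ℕ×ℕ, F pq θ :=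
        intervalIntegral.integral_congr (fun θ _ => hpt θ)
    _ = ∫ θ in Set.Ioc (0:ℝ) (2*Real.pi), ∑' pq : ℕ×ℕ, F pq θ :=
        intervalIntegral.integral_of_le h0le
    _ = ∑' pq : ℕ×ℕ, ∫ θ in Set.Ioc (0:ℝ) (2*Real.pi), F pq θ := key
    _ = ∑' pq : ℕ×ℕ, (if pq.1 = pq.2 + n then (2*Real.pi : ℂ) * (c pq.1 * d pq.2) else 0) :=
        tsum_congr hint
    _ = 2*Real.pi * (r:ℂ)^n * besselJ n w := hreindex


lemma norm_besselJ_le (n : ℕ) (w : ℂ) (r : ℝ) (hr : 0 < r) :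
    ‖besselJ n w‖ ≤
      Real.exp (‖w*r - (starRingEnd ℂ) w / r‖ / 2) / r^n := by
  have hrC : (r : ℂ) ≠ 0 := by exact_mod_cast hr.ne'
  have hA := besselJ_integral n w r hr
  set C : ℝ := Real.exp (‖w*r - (starRingEnd ℂ) w / r‖ / 2) with hC
  have hbound : ∀ θ ∈ Set.uIoc (0:ℝ) (2*Real.pi),
      ‖Complex.exp ((w*r/2) * Complex.exp (θ*Complex.I)) *
        Complex.exp (-(w/(2*r)) * Complex.exp (-(θ*Complex.I))) *
        Complex.exp (-(n:ℂ) * (θ*Complex.I))‖ ≤ C := by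
    intro θ _
    set E : ℂ := Complex.exp ((θ:ℂ)*Complex.I) with hE
    have hEconj : Complex.exp (-((θ:ℂ)*Complex.I)) = (starRingEnd ℂ) E := by
      rw [hE, ← Complex.exp_conj]
      congr 1
      simp [Complex.conj_ofReal]
    have habsE : ‖E‖ = 1 := by
      rw [hE, Complex.norm_exp]
      simp
    rw [norm_mul, norm_mul,
      Complex.norm_exp, Complex.norm_exp, Complex.norm_exp, ← Real.exp_add, ← Real.exp_add]
    apply Real.exp_le_exp.mpr
    have hCre : ((-(n:ℂ)) * ((θ:ℂ)*Complex.I)).re = 0 := by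
      simp
    have hBre : ((-(w/(2*r)) * Complex.exp (-((θ:ℂ)*Complex.I)))).re
        = (((starRingEnd ℂ) (-(w/(2*r)))) * E).re := by
      rw [hEconj, ← Complex.conj_re ((-(w/(2*r))) * (starRingEnd ℂ) E), map_mul]
      simp
    have hsum : ((w*r/2) * E).re + (((starRingEnd ℂ) (-(w/(2*r)))) * E).re
        = (((w*r/2) - (starRingEnd ℂ) w/(2*r)) * E).re := by
      rw [← Complex.add_re]
      congr 1
      rw [map_neg, map_div₀, map_mul, Complex.conj_ofReal]
      have h2c : (starRingEnd ℂ) (2:ℂ) = 2 := by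
        rw [show (2:ℂ) = ((2:ℝ):ℂ) by norm_num, Complex.conj_ofReal]
      rw [h2c]
      ring
    rw [hCre, add_zero, hBre, hsum]
    have h1 : (((w*r/2) - (starRingEnd ℂ) w/(2*r)) * E).re ≤
        ‖((w*r/2) - (starRingEnd ℂ) w/(2*r)) * E‖ := Complex.re_le_norm _
    have h2 : ‖((w*r/2) - (starRingEnd ℂ) w/(2*r)) * E‖ =
        ‖(w*r/2) - (starRingEnd ℂ) w/(2*r)‖ := by
      rw [norm_mul, habsE, mul_one]
    have h3 : (w*(r:ℂ)/2) - (starRingEnd ℂ) w/(2*(r:ℂ)) = (w*r - (starRingEnd ℂ) w/r)/2 := by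
      field_simp
    refine le_trans h1 (le_of_eq ?_)
    rw [h2, h3, norm_div, Complex.norm_two]
  have hInorm : ‖∫ θ in (0:ℝ)..(2*Real.pi),
      Complex.exp ((w*r/2) * Complex.exp (θ*Complex.I)) *
      Complex.exp (-(w/(2*r)) * Complex.exp (-(θ*Complex.I))) *
      Complex.exp (-(n:ℂ) * (θ*Complex.I))‖ ≤ C * |2*Real.pi - 0| :=
    intervalIntegral.norm_integral_le_of_norm_le_const hbound
  rw [hA] at hInorm
  have habs2 : ‖(2*(Real.pi:ℂ)*((r:ℝ):ℂ)^n * besselJ n w)‖ =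
      (2*Real.pi*r^n) * ‖besselJ n w‖ := by
    rw [norm_mul]
    congr 1
    rw [show (2*(Real.pi:ℂ)*((r:ℝ):ℂ)^n) = (((2*Real.pi*r^n : ℝ)):ℂ) by push_cast; ring,
      Complex.norm_real, Real.norm_eq_abs, _root_.abs_of_nonneg (by positivity)]
  rw [habs2, _root_.abs_of_nonneg (by rw [sub_zero]; positivity : (0:ℝ) ≤ 2*Real.pi - 0)] at hInorm
  have hrn : (0:ℝ) < r^n := pow_pos hr n
  rw [le_div_iff₀ hrn]
  nlinarith [Real.pi_pos]

lemma cpow_half_sq (x : ℂ) : (x ^ (1/2 : ℂ))^2 = x := by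
  by_cases hx : x = 0
  · rw [hx, Complex.zero_cpow (by norm_num : (1/2:ℂ) ≠ 0)]
    simp
  · rw [Complex.cpow_def_of_ne_zero hx, sq, ← Complex.exp_add,
      show Complex.log x * (1/2) + Complex.log x * (1/2) = Complex.log x by ring]
    exact Complex.exp_log hx

lemma cpow_half_re_nonneg (x : ℂ) : 0 ≤ (x ^ (1/2 : ℂ)).re := by
  by_cases hx : x = 0
  · rw [hx, Complex.zero_cpow (by norm_num : (1/2:ℂ) ≠ 0)]
    simp
  · rw [Complex.cpow_def_of_ne_zero hx, Complex.exp_re]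
    apply mul_nonneg (Real.exp_nonneg _)
    have him : (Complex.log x * (1/2 : ℂ)).im = Complex.arg x / 2 := by
      rw [Complex.mul_im]
      simp [Complex.log_im]
      ring
    rw [him]
    apply Real.cos_nonneg_of_mem_Icc
    constructor
    · linarith [Complex.neg_pi_lt_arg x]
    · linarith [Complex.arg_le_pi x]

lemma besselJ_succ_zero (n : ℕ) : besselJ (n+1) 0 = 0 := by
  rw [besselJ]
  have h : ∀ j : ℕ, ((-1 : ℂ) ^ j / ((Nat.factorial j : ℂ) * (Nat.factorial (n+1 + j) : ℂ))) *
      ((0:ℂ) / 2) ^ (n+1 + 2 * j) = 0 := by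
    intro j
    rw [zero_div, zero_pow (by omega : n+1+2*j ≠ 0), mul_zero]
  rw [tsum_congr h, tsum_zero]

/-- For `Ω(z)·|t| < 1`, the Kapteyn series `∑_{n≥1} tⁿ J_n(nz)` is summable. -/
theorem kapteyn_summable (t : ℝ) (z : ℂ) (h : Omega z * |t| < 1) :
    Summable (fun n : ℕ => (t : ℂ) ^ (n + 1) * besselJ (n + 1) ((n + 1 : ℕ) * z)) := by
  by_cases hz : z = 0
  · subst hz
    have hzero : ∀ n : ℕ, (t : ℂ) ^ (n + 1) * besselJ (n + 1) ((n + 1 : ℕ) * (0:ℂ)) = 0 := by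
      intro n
      rw [mul_zero, besselJ_succ_zero, mul_zero]
    exact summable_zero.congr fun n => (hzero n).symm
  · set w : ℂ := (1 - z^2) ^ (1/2 : ℂ) with hw
    have hw2 : w^2 = 1 - z^2 := cpow_half_sq _
    have hwre : 0 ≤ w.re := cpow_half_re_nonneg _
    have h1w : (1:ℂ) + w ≠ 0 := by
      intro hcon
      have hwn : w = -1 := by linear_combination hcon
      rw [hwn] at hw2
      have hz2 : z^2 = 0 := by linear_combination hw2
      exact hz (pow_eq_zero_iff (by norm_num) |>.mp hz2)
    have hzabs : 0 < ‖z‖ := norm_pos_iff.mpr hz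
    have h1wabs : 0 < ‖1+w‖ := norm_pos_iff.mpr h1w
    set r : ℝ := ‖1+w‖ / ‖z‖ with hr_def
    have hr : 0 < r := div_pos h1wabs hzabs
    have hrC : ((r:ℝ):ℂ) ≠ 0 := by exact_mod_cast hr.ne'
    have haC : ((‖z‖ : ℝ):ℂ) ≠ 0 := by exact_mod_cast hzabs.ne'
    have hbC : ((‖1+w‖ : ℝ):ℂ) ≠ 0 := by exact_mod_cast h1wabs.ne'
    have hzz : ((‖z‖ : ℝ):ℂ)^2 = z * (starRingEnd ℂ) z := by
      rw [← Complex.ofReal_pow, Complex.sq_norm, Complex.mul_conj]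
    have hww : ((‖1+w‖ : ℝ):ℂ)^2 = (1+w) * (1 + (starRingEnd ℂ) w) := by
      rw [show (1:ℂ) + (starRingEnd ℂ) w = (starRingEnd ℂ) (1 + w) by rw [map_add, map_one],
        ← Complex.ofReal_pow, Complex.sq_norm, Complex.mul_conj]
    have hconj2 : (starRingEnd ℂ) z ^ 2 = 1 - (starRingEnd ℂ) w ^ 2 := by
      have hcw := congrArg (starRingEnd ℂ) hw2
      simp only [map_pow, map_sub, map_one] at hcw
      linear_combination hcw
    have hnum : z * ((‖1+w‖ : ℝ):ℂ)^2 - (starRingEnd ℂ) z * ((‖z‖ : ℝ):ℂ)^2 =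
        (w + (starRingEnd ℂ) w) * (z * (1 + (starRingEnd ℂ) w)) := by
      linear_combination z * hww - (starRingEnd ℂ) z * hzz - z * hconj2
    have hstep : z*(r:ℂ) - (starRingEnd ℂ) z/(r:ℂ) =
        (w + (starRingEnd ℂ) w) * (z * (1 + (starRingEnd ℂ) w)) /
          (((‖z‖ : ℝ):ℂ) * ((‖1+w‖ : ℝ):ℂ)) := by
      have hrcast : ((r:ℝ):ℂ) = ((‖1+w‖ : ℝ):ℂ) / ((‖z‖ : ℝ):ℂ) := by
        rw [hr_def]
        push_cast
        ring
      rw [hrcast, ← hnum]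
      field_simp
    have hkey : ‖z*(r:ℂ) - (starRingEnd ℂ) z/(r:ℂ)‖ = 2 * w.re := by
      rw [hstep, norm_div, norm_mul, norm_mul, norm_mul]
      rw [show w + (starRingEnd ℂ) w = ((2*w.re : ℝ):ℂ) from Complex.add_conj w]
      have h1cw : ‖1 + (starRingEnd ℂ) w‖ = ‖1+w‖ := by
        rw [show ((1:ℂ) + (starRingEnd ℂ) w) = (starRingEnd ℂ) (1+w) by rw [map_add, map_one],
          Complex.norm_conj]
      rw [h1cw, Complex.norm_real, Complex.norm_real, Complex.norm_real,
        Real.norm_eq_abs, Real.norm_eq_abs, Real.norm_eq_abs,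
        _root_.abs_of_nonneg (by linarith : (0:ℝ) ≤ 2*w.re),
        _root_.abs_of_nonneg hzabs.le, _root_.abs_of_nonneg h1wabs.le]
      field_simp
    have hOmega : Omega z = Real.exp w.re * ‖z‖ / ‖1+w‖ := by
      rw [Omega, ← hw, norm_div, norm_mul, Complex.norm_exp]
      ring
    have hOr : Real.exp w.re / r = Omega z := by
      rw [hOmega, hr_def]
      field_simp
    have hq0 : 0 ≤ Omega z * |t| := by
      apply mul_nonneg _ (abs_nonneg t)
      rw [Omega]
      exact norm_nonneg _
    apply Summable.of_norm_bounded (g := fun n : ℕ => (Omega z * |t|) * (Omega z * |t|)^n)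
      ((summable_geometric_of_lt_one hq0 h).mul_left _)
    intro n
    have hb := norm_besselJ_le (n+1) (((n+1:ℕ):ℂ)*z) r hr
    have harg : ((n+1:ℕ):ℂ)*z*((r:ℝ):ℂ) - (starRingEnd ℂ) (((n+1:ℕ):ℂ)*z)/((r:ℝ):ℂ)
        = ((n+1:ℕ):ℂ) * (z*((r:ℝ):ℂ) - (starRingEnd ℂ) z/((r:ℝ):ℂ)) := by
      rw [map_mul, Complex.conj_natCast]
      ring
    rw [harg, norm_mul, Complex.norm_natCast, hkey] at hb
    have hexp : Real.exp (((n+1:ℕ):ℝ) * (2*w.re) / 2) = (Real.exp w.re)^(n+1) := by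
      rw [show ((n+1:ℕ):ℝ) * (2*w.re)/2 = ((n+1:ℕ):ℝ) * w.re by ring, Real.exp_nat_mul]
    rw [hexp] at hb
    have hJ : ‖besselJ (n+1) (((n+1:ℕ):ℂ)*z)‖ ≤ (Omega z)^(n+1) := by
      calc ‖besselJ (n+1) (((n+1:ℕ):ℂ)*z)‖
          ≤ (Real.exp w.re)^(n+1)/r^(n+1) := hb
        _ = (Real.exp w.re / r)^(n+1) := (div_pow _ _ _).symm
        _ = (Omega z)^(n+1) := by rw [hOr]
    rw [norm_mul, norm_pow, Complex.norm_real, Real.norm_eq_abs]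
    calc |t|^(n+1) * ‖besselJ (n+1) (((n+1:ℕ):ℂ)*z)‖
        ≤ |t|^(n+1) * (Omega z)^(n+1) := by
          apply mul_le_mul_of_nonneg_left hJ (by positivity)
      _ = (Omega z * |t|) * (Omega z * |t|)^n := by
          rw [← mul_pow]
          ring
end

section
/- For every t ∈ ℝ there exists ε > 0 such that for all z ∈ ℂ with |z| < ε, both series below are summable and ∑_{n=1}^∞ t^n · J_n(n·z) = ∑_{n=1}^∞ A_n(t) · z^n. -/
/-- The polynomial `A_n(t) = ((−1)^n/n!) ∑_{k=0}^{⌊n/2⌋} (−1)^k C(n,k) (k − n/2)^n t^{n−2k}`,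
with the convention `A_0 ≡ 0`. -/
noncomputable def A (n : ℕ) (t : ℝ) : ℝ :=
  if n = 0 then 0 else
    ((-1 : ℝ) ^ n / Nat.factorial n) *
      ∑ k ∈ Finset.range (n / 2 + 1),
        (-1 : ℝ) ^ k * (Nat.choose n k) * ((k : ℝ) - n / 2) ^ n * t ^ (n - 2 * k)

lemma aux_pow_le_factorial_mul (m : ℕ) :
    (m : ℝ) ^ m ≤ (Nat.factorial m : ℝ) * Real.exp 1 ^ m := by
  have h := Real.sum_le_exp_of_nonneg (x := (m : ℝ)) (by positivity) (m + 1)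
  have h2 : (m : ℝ) ^ m / (Nat.factorial m : ℝ) ≤
      ∑ i ∈ Finset.range (m + 1), (m : ℝ) ^ i / (Nat.factorial i : ℝ) := by
    apply Finset.single_le_sum (f := fun i => (m : ℝ) ^ i / (Nat.factorial i : ℝ))
    · intro i _; positivity
    · simp
  have h3 : (m : ℝ) ^ m / (Nat.factorial m : ℝ) ≤ Real.exp 1 ^ m := by
    calc (m : ℝ) ^ m / (Nat.factorial m : ℝ) ≤ _ := h2
    _ ≤ Real.exp m := h
    _ = Real.exp 1 ^ m := by rw [← Real.exp_nat_mul]; ring_nf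
  have hfac : (0 : ℝ) < (Nat.factorial m : ℝ) := by positivity
  rw [div_le_iff₀ hfac] at h3
  linarith [h3]

lemma aux_choose_le_two_pow (m j : ℕ) : (Nat.choose m j : ℝ) ≤ 2 ^ m := by
  rcases le_or_gt j m with h | h
  · have : Nat.choose m j ≤ 2 ^ m := by
      calc Nat.choose m j
          ≤ ∑ i ∈ Finset.range (m + 1), Nat.choose m i :=
            Finset.single_le_sum (f := fun i => Nat.choose m i) (fun i _ => Nat.zero_le _)
              (Finset.mem_range.2 (Nat.lt_succ_of_le h))
        _ = 2 ^ m := Nat.sum_range_choose m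
    exact_mod_cast this
  · simp [Nat.choose_eq_zero_of_lt h]

lemma aux_norm_bound (x : ℝ) (hx : 0 ≤ x) (n j : ℕ) :
    ((n + 1 : ℕ) : ℝ) ^ (n + 1 + 2 * j) * x ^ (n + 1 + 2 * j) /
      ((Nat.factorial j : ℝ) * (Nat.factorial (n + 1 + j) : ℝ)) ≤
    (2 * Real.exp 1 * x) ^ (n + 1 + 2 * j) := by
  set m := n + 1 + 2 * j with hm
  have hjm : j ≤ m := by omega
  have hfac : (Nat.choose m j : ℝ) * ((Nat.factorial j : ℝ) * (Nat.factorial (n + 1 + j) : ℝ))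
      = (Nat.factorial m : ℝ) := by
    have h0 := Nat.choose_mul_factorial_mul_factorial hjm
    have h2 : m - j = n + 1 + j := by omega
    rw [h2] at h0
    exact_mod_cast by rw [← h0]; push_cast; ring
  have h1 : ((n + 1 : ℕ) : ℝ) ^ m ≤ (m : ℝ) ^ m := by
    apply pow_le_pow_left₀ (by positivity)
    exact_mod_cast by omega
  have h2 := aux_pow_le_factorial_mul m
  have hden : (0 : ℝ) < (Nat.factorial j : ℝ) * (Nat.factorial (n + 1 + j) : ℝ) := by positivity
  rw [div_le_iff₀ hden]
  calc ((n + 1 : ℕ) : ℝ) ^ m * x ^ m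
      ≤ ((Nat.factorial m : ℝ) * Real.exp 1 ^ m) * x ^ m :=
        mul_le_mul_of_nonneg_right (h1.trans h2) (by positivity)
    _ = (Nat.choose m j : ℝ) * ((Nat.factorial j : ℝ) * (Nat.factorial (n + 1 + j) : ℝ))
          * Real.exp 1 ^ m * x ^ m := by rw [hfac]
    _ ≤ (2 : ℝ) ^ m * ((Nat.factorial j : ℝ) * (Nat.factorial (n + 1 + j) : ℝ))
          * Real.exp 1 ^ m * x ^ m := by
        have := aux_choose_le_two_pow m j
        gcongr
    _ = (2 * Real.exp 1 * x) ^ m *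
          ((Nat.factorial j : ℝ) * (Nat.factorial (n + 1 + j) : ℝ)) := by
        rw [mul_pow, mul_pow]; ring

lemma aux_term (t : ℝ) (z : ℂ) (m k : ℕ) (hk : 2 * k ≤ m) :
    (t : ℂ) ^ (m - 2 * k + 1) *
      (((-1 : ℂ) ^ k /
        ((Nat.factorial k : ℂ) * (Nat.factorial (m - 2 * k + 1 + k) : ℂ))) *
        (((m - 2 * k + 1 : ℕ) : ℂ) * z / 2) ^ (m - 2 * k + 1 + 2 * k))
    = ((-1 : ℂ) ^ (m + 1) / (Nat.factorial (m + 1) : ℂ)) *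
      ((-1 : ℂ) ^ k * (Nat.choose (m + 1) k : ℂ) *
        ((k : ℂ) - (m + 1 : ℂ) / 2) ^ (m + 1) * (t : ℂ) ^ (m + 1 - 2 * k)) *
      z ^ (m + 1) := by
  have e1 : m - 2 * k + 1 + k = m + 1 - k := by omega
  have e2 : m - 2 * k + 1 + 2 * k = m + 1 := by omega
  have e3 : m - 2 * k + 1 = m + 1 - 2 * k := by omega
  rw [e1, e2, e3]
  have hkM : k ≤ m + 1 := by omega
  have h2kM : 2 * k ≤ m + 1 := by omega
  have hcast : ((m + 1 - 2 * k : ℕ) : ℂ) = ((m : ℂ) + 1) - 2 * k := by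
    push_cast [Nat.cast_sub h2kM]; ring
  rw [Nat.cast_choose ℂ hkM, hcast]
  have hfk : (Nat.factorial k : ℂ) ≠ 0 := Nat.cast_ne_zero.2 (Nat.factorial_ne_zero k)
  have hfMk : (Nat.factorial (m + 1 - k) : ℂ) ≠ 0 := Nat.cast_ne_zero.2 (Nat.factorial_ne_zero _)
  have hfM : (Nat.factorial (m + 1) : ℂ) ≠ 0 := Nat.cast_ne_zero.2 (Nat.factorial_ne_zero _)
  have hsign : ((k : ℂ) - ((m : ℂ) + 1) / 2) ^ (m + 1)
      = (-1 : ℂ) ^ (m + 1) * ((((m : ℂ) + 1) - 2 * k) ^ (m + 1) / 2 ^ (m + 1)) := by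
    rw [show ((k : ℂ) - ((m : ℂ) + 1) / 2) = -((((m : ℂ) + 1) - 2 * k) / 2) by ring, neg_pow,
      div_pow]
  rw [hsign, show ((((m : ℂ) + 1) - 2 * (k : ℂ)) * z / 2) ^ (m + 1)
      = (((m : ℂ) + 1) - 2 * (k : ℂ)) ^ (m + 1) * z ^ (m + 1) / 2 ^ (m + 1) by
    rw [div_pow, mul_pow]]
  have hneg : (-1 : ℂ) ^ (m + 1) * (-1 : ℂ) ^ (m + 1) = 1 := by
    rw [← pow_add, ← two_mul, pow_mul]; norm_num
  trans ((-1 : ℂ) ^ (m + 1) * (-1 : ℂ) ^ (m + 1)) *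
      ((1 / (Nat.factorial (m + 1) : ℂ)) *
        ((-1 : ℂ) ^ k *
          ((Nat.factorial (m + 1) : ℂ) / ((Nat.factorial k : ℂ) * (Nat.factorial (m + 1 - k) : ℂ))) *
          ((((m : ℂ) + 1) - 2 * k) ^ (m + 1) / 2 ^ (m + 1)) * (t : ℂ) ^ (m + 1 - 2 * k)) *
        z ^ (m + 1))
  · rw [hneg, one_mul]
    field_simp
  · ring

set_option maxHeartbeats 1000000 in
/-- For every `t`, near `z = 0` the Kapteyn series equals the power series
`∑_{n≥1} A_n(t) zⁿ`. -/
theorem kapteyn_power_series (t : ℝ) :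
    ∃ ε > 0, ∀ z : ℂ, ‖z‖ < ε →
      Summable (fun n : ℕ => (t : ℂ) ^ (n + 1) * besselJ (n + 1) ((n + 1 : ℕ) * z)) ∧
      Summable (fun n : ℕ => (A (n + 1) t : ℂ) * z ^ (n + 1)) ∧
      ∑' n : ℕ, (t : ℂ) ^ (n + 1) * besselJ (n + 1) ((n + 1 : ℕ) * z) =
        ∑' n : ℕ, (A (n + 1) t : ℂ) * z ^ (n + 1) := by
  refine ⟨1 / (20 * (|t| + 1)), by positivity, fun z hz => ?_⟩
  obtain ⟨f, hf_def⟩ : ∃ f : ℕ × ℕ → ℂ, f = fun p =>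
    (t : ℂ) ^ (p.1 + 1) *
      (((-1 : ℂ) ^ p.2 / ((Nat.factorial p.2 : ℂ) * (Nat.factorial (p.1 + 1 + p.2) : ℂ))) *
        (((p.1 + 1 : ℕ) : ℂ) * z / 2) ^ (p.1 + 1 + 2 * p.2)) := ⟨_, rfl⟩
  obtain ⟨a, ha_def⟩ : ∃ a : ℝ, a = (|t| + 1) * (Real.exp 1 * ‖z‖) := ⟨_, rfl⟩
  have ha0 : 0 ≤ a := by rw [ha_def]; positivity
  have ha1 : a < 1 := by
    have he : Real.exp 1 < 3 := by
      have := Real.exp_one_lt_d9; linarith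
    have hz0 : 0 ≤ ‖z‖ := norm_nonneg z
    have h1 : (|t| + 1) * ‖z‖ < (|t| + 1) * (1 / (20 * (|t| + 1))) := by
      apply mul_lt_mul_of_pos_left hz (by positivity)
    have h2 : (|t| + 1) * (1 / (20 * (|t| + 1))) = 1 / 20 := by
      field_simp
    rw [h2] at h1
    calc a = Real.exp 1 * ((|t| + 1) * ‖z‖) := by rw [ha_def]; ring
      _ ≤ 3 * ((|t| + 1) * ‖z‖) := by
          apply mul_le_mul_of_nonneg_right he.le (by positivity)
      _ < 3 * (1 / 20) := by
          apply mul_lt_mul_of_pos_left h1 (by norm_num)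
      _ < 1 := by norm_num
  -- norm bound
  have hbound : ∀ p : ℕ × ℕ, ‖f p‖ ≤ a ^ (p.1 + 1) * (a ^ 2) ^ p.2 := by
    rintro ⟨n, j⟩
    have hnorm : ‖f (n, j)‖ = |t| ^ (n + 1) *
        (((n + 1 : ℕ) : ℝ) ^ (n + 1 + 2 * j) * (‖z‖ / 2) ^ (n + 1 + 2 * j) /
          ((Nat.factorial j : ℝ) * (Nat.factorial (n + 1 + j) : ℝ))) := by
      simp only [hf_def, norm_mul, norm_div, norm_pow, Complex.norm_natCast,
        Complex.norm_real, Real.norm_eq_abs, Complex.norm_ofNat, norm_neg, norm_one,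
        one_pow, mul_pow, div_pow, map_mul, map_div₀, map_pow,
        Complex.norm_natCast, Nat.abs_cast]
      ring
    rw [hnorm, ← pow_mul, ← pow_add]
    have key := aux_norm_bound (‖z‖ / 2) (by positivity) n j
    have h2e : 2 * Real.exp 1 * (‖z‖ / 2) = Real.exp 1 * ‖z‖ := by ring
    rw [h2e] at key
    calc |t| ^ (n + 1) *
        (((n + 1 : ℕ) : ℝ) ^ (n + 1 + 2 * j) * (‖z‖ / 2) ^ (n + 1 + 2 * j) /
          ((Nat.factorial j : ℝ) * (Nat.factorial (n + 1 + j) : ℝ)))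
        ≤ |t| ^ (n + 1) * (Real.exp 1 * ‖z‖) ^ (n + 1 + 2 * j) := by
          apply mul_le_mul_of_nonneg_left key (by positivity)
      _ ≤ (|t| + 1) ^ (n + 1 + 2 * j) * (Real.exp 1 * ‖z‖) ^ (n + 1 + 2 * j) := by
          apply mul_le_mul_of_nonneg_right _ (by positivity)
          calc |t| ^ (n + 1) ≤ (|t| + 1) ^ (n + 1) := by
                apply pow_le_pow_left₀ (abs_nonneg t); linarith
            _ ≤ (|t| + 1) ^ (n + 1 + 2 * j) := by
                apply pow_le_pow_right₀ (by linarith [abs_nonneg t]); omega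
      _ = a ^ (n + 1 + 2 * j) := by rw [ha_def, ← mul_pow]
  have hsum_b : Summable fun p : ℕ × ℕ => a ^ (p.1 + 1) * (a ^ 2) ^ p.2 := by
    have s1 : Summable (fun n : ℕ => a ^ (n + 1)) :=
      ((summable_geometric_of_lt_one ha0 ha1).mul_left a).congr fun n => by
        rw [pow_succ]; ring
    have s2 : Summable (fun j : ℕ => (a ^ 2) ^ j) :=
      summable_geometric_of_lt_one (by positivity) (by nlinarith)
    exact s1.mul_of_nonneg s2 (fun n => by positivity) (fun j => by positivity)
  have hf : Summable f := Summable.of_norm_bounded hsum_b hbound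
  -- LHS identification
  have hLeq : ∀ n : ℕ, (t : ℂ) ^ (n + 1) * besselJ (n + 1) (((n + 1 : ℕ) : ℂ) * z)
      = ∑' j, f (n, j) := by
    intro n
    rw [hf_def, besselJ, ← tsum_mul_left]
  have hsum1 : Summable (fun n : ℕ => (t : ℂ) ^ (n + 1) * besselJ (n + 1) ((n + 1 : ℕ) * z)) :=
    hf.prod.congr fun n => (hLeq n).symm
  -- reindexing
  obtain ⟨i, hi_def⟩ : ∃ i : ℕ × ℕ → ℕ × ℕ, i = fun p => (p.1 + 2 * p.2, p.2) := ⟨_, rfl⟩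
  have hi : Function.Injective i := by
    rintro ⟨a1, b1⟩ ⟨c1, d1⟩ h
    simp only [hi_def, Prod.mk.injEq] at h
    refine Prod.ext ?_ ?_ <;> simp <;> omega
  obtain ⟨g, hg_def⟩ : ∃ g : ℕ × ℕ → ℂ,
      g = fun q => if 2 * q.2 ≤ q.1 then f (q.1 - 2 * q.2, q.2) else 0 := ⟨_, rfl⟩
  have hgi : ∀ p, g (i p) = f p := by
    rintro ⟨n, j⟩
    simp only [hg_def, hi_def]
    rw [show n + 2 * j - 2 * j = n from by omega, if_pos (by omega)]
  have hsupp : ∀ q ∉ Set.range i, g q = 0 := by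
    rintro ⟨m, k⟩ hq
    rw [hg_def]
    by_cases h : 2 * k ≤ m
    · refine absurd ⟨(m - 2 * k, k), ?_⟩ hq
      rw [hi_def]
      simp only
      rw [Prod.mk.injEq]
      exact ⟨by omega, rfl⟩
    · simp [h]
  have hg : Summable g := by
    rw [← hi.summable_iff hsupp]
    exact hf.congr fun p => (hgi p).symm
  have hgf : ∑' q, g q = ∑' p, f p := by
    rw [← hi.tsum_eq (Function.support_subset_iff'.mpr hsupp)]
    exact tsum_congr hgi
  -- inner sums
  have hinner : ∀ m : ℕ, ∑' k, g (m, k) = ((A (m + 1) t : ℝ) : ℂ) * z ^ (m + 1) := by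
    intro m
    rw [tsum_eq_sum (s := Finset.range ((m + 1) / 2 + 1))
      (fun k hk => by rw [hg_def]; exact if_neg (by simp at hk; omega))]
    rw [A, if_neg (Nat.succ_ne_zero m)]
    push_cast
    rw [Finset.mul_sum, Finset.sum_mul]
    apply Finset.sum_congr rfl
    intro k hk
    have hk2 : 2 * k ≤ m + 1 := by simp at hk; omega
    by_cases h : 2 * k ≤ m
    · rw [hg_def]
      simp only
      rw [if_pos h]
      simp only [hf_def]
      rw [aux_term t z m k h]
    · have h2k : 2 * k = m + 1 := by omega
      rw [hg_def]
      simp only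
      rw [if_neg h]
      have hb : (k : ℂ) - ((m : ℂ) + 1) / 2 = 0 := by
        have : ((2 * k : ℕ) : ℂ) = ((m + 1 : ℕ) : ℂ) := by rw [h2k]
        push_cast at this
        linear_combination this / 2
      rw [hb]
      rw [zero_pow (Nat.succ_ne_zero m)]
      ring
  have hsum2 : Summable (fun n : ℕ => (A (n + 1) t : ℂ) * z ^ (n + 1)) :=
    hg.prod.congr fun m => hinner m
  refine ⟨hsum1, hsum2, ?_⟩
  calc ∑' n : ℕ, (t : ℂ) ^ (n + 1) * besselJ (n + 1) ((n + 1 : ℕ) * z)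
      = ∑' n, ∑' j, f (n, j) := tsum_congr hLeq
    _ = ∑' p, f p := (Summable.tsum_prod hf).symm
    _ = ∑' q, g q := hgf.symm
    _ = ∑' m, ∑' k, g (m, k) := Summable.tsum_prod hg
    _ = ∑' n : ℕ, (A (n + 1) t : ℂ) * z ^ (n + 1) := tsum_congr hinner
end

section
/- Let α : ℕ → ℂ and M ≥ 1 satisfy |α_n| ≤ M^n for all n ≥ 1, and set a_k = ∑_{n=1}^k α_n · cos((k−n)π/2) · n^k / ((k−n)!!·(k+n)!!) for k ≥ 1. Then for every z ∈ ℂ with |z| < 1/(e·M), the series ∑_{n=1}^∞ α_n · J_n(n·z) and ∑_{k=1}^∞ a_k · z^k are both summable and are equal. -/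
open Nat in
lemma kapteyn_aux_pow (N j : ℕ) :
    (N : ℝ) ^ (N + 2 * j) ≤ Real.exp 1 ^ N * ((N : ℝ) ^ j * ((N + j)! : ℝ)) := by
  have h1 : (N : ℝ) ^ N ≤ Real.exp 1 ^ N * (N ! : ℝ) := by
    have h := Real.pow_div_factorial_le_exp (x := (N : ℝ)) (Nat.cast_nonneg N) N
    rw [div_le_iff₀ (by positivity)] at h
    calc (N : ℝ) ^ N ≤ Real.exp N * (N ! : ℝ) := h
      _ = Real.exp 1 ^ N * (N ! : ℝ) := by
          rw [← Real.exp_nat_mul]; norm_num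
  have h2 : (N ! : ℝ) * (N : ℝ) ^ j ≤ ((N + j)! : ℝ) := by
    have h3 : N ! * N ^ j ≤ (N + j)! :=
      le_trans (Nat.mul_le_mul_left _ (Nat.pow_le_pow_left (Nat.le_succ N) j))
        Nat.factorial_mul_pow_le_factorial
    exact_mod_cast h3
  calc (N : ℝ) ^ (N + 2 * j) = (N : ℝ) ^ N * (N : ℝ) ^ j * (N : ℝ) ^ j := by
        rw [← pow_add, ← pow_add]; congr 1; omega
    _ ≤ (Real.exp 1 ^ N * (N ! : ℝ)) * (N : ℝ) ^ j * (N : ℝ) ^ j := by gcongr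
    _ = Real.exp 1 ^ N * ((N : ℝ) ^ j * ((N ! : ℝ) * (N : ℝ) ^ j)) := by ring
    _ ≤ Real.exp 1 ^ N * ((N : ℝ) ^ j * ((N + j)! : ℝ)) := by gcongr

open Nat in
lemma kapteyn_norm_bound (α : ℕ → ℂ) (M : ℝ) (hM : 1 ≤ M)
    (hα : ∀ n : ℕ, 1 ≤ n → ‖α n‖ ≤ M ^ n)
    (z : ℂ) (q : ℝ)
    (hqdef : q = Real.exp 1 * M * ‖z‖ / 2 * Real.exp (‖z‖ ^ 2 / 2))
    (N j : ℕ) (hN1 : 1 ≤ N) :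
    ‖α N * ((-1 : ℂ) ^ j / ((j ! : ℂ) * (((N + j)! : ℕ) : ℂ)) *
      (((N : ℕ) : ℂ) * z / 2) ^ (N + 2 * j))‖ ≤ q ^ N * (1/2 : ℝ) ^ j := by
  have hr0 : (0:ℝ) ≤ ‖z‖ := norm_nonneg z
  set r : ℝ := ‖z‖ with hr
  have hM0 : (0:ℝ) < M := lt_of_lt_of_le one_pos hM
  have hnorm : ‖α N * ((-1 : ℂ) ^ j / ((j ! : ℂ) * (((N + j)! : ℕ) : ℂ)) *
      (((N : ℕ) : ℂ) * z / 2) ^ (N + 2 * j))‖ =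
      ‖α N‖ * ((1 / ((j ! : ℝ) * ((N + j)! : ℝ))) * ((N : ℝ) * r / 2) ^ (N + 2 * j)) := by
    simp only [norm_mul, norm_pow, norm_div]
    simp [Complex.norm_natCast, abs_pow]
    exact Or.inl (Or.inl rfl)
  rw [hnorm]
  have key1 := kapteyn_aux_pow N j
  have key2 : ((N : ℝ) * r ^ 2 / 2) ^ j / (j ! : ℝ) ≤ Real.exp ((N : ℝ) * r ^ 2 / 2) :=
    Real.pow_div_factorial_le_exp (x := (N : ℝ) * r ^ 2 / 2) (by positivity) j
  have hαN : ‖α N‖ ≤ M ^ N := hα N hN1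
  calc ‖α N‖ * ((1 / ((j ! : ℝ) * ((N + j)! : ℝ))) * ((N : ℝ) * r / 2) ^ (N + 2 * j))
      ≤ M ^ N * ((1 / ((j ! : ℝ) * ((N + j)! : ℝ))) * ((N : ℝ) * r / 2) ^ (N + 2 * j)) := by
        gcongr
    _ = M ^ N * ((1 / ((j ! : ℝ) * ((N + j)! : ℝ))) *
          ((N : ℝ) ^ (N + 2 * j) * (r / 2) ^ (N + 2 * j))) := by
        rw [mul_div_assoc, mul_pow]
    _ ≤ M ^ N * ((1 / ((j ! : ℝ) * ((N + j)! : ℝ))) *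
          ((Real.exp 1 ^ N * ((N : ℝ) ^ j * ((N + j)! : ℝ))) * (r / 2) ^ (N + 2 * j))) := by
        gcongr
    _ = (M * Real.exp 1 * (r / 2)) ^ N * (((N : ℝ) * r ^ 2 / 2) ^ j / (j ! : ℝ)) * (1/2 : ℝ) ^ j := by
        rw [pow_add (r / 2) N (2 * j), pow_mul (r / 2) 2 j]
        have h1 : (j ! : ℝ) ≠ 0 := by positivity
        have h2 : ((N + j)! : ℝ) ≠ 0 := by positivity
        generalize Real.exp 1 = E
        field_simp
        rw [show (r ^ 2 / 2 ^ 2) ^ j = (r ^ 2 / 2) ^ j * (1 / 2) ^ j by rw [← mul_pow]; congr 1; ring]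
        ring
    _ ≤ (M * Real.exp 1 * (r / 2)) ^ N * Real.exp ((N : ℝ) * r ^ 2 / 2) * (1/2 : ℝ) ^ j := by
        have hMe : (0:ℝ) ≤ M * Real.exp 1 * (r / 2) := by positivity
        gcongr
    _ = q ^ N * (1/2 : ℝ) ^ j := by
        rw [show (N : ℝ) * r ^ 2 / 2 = (N : ℕ) * (r ^ 2 / 2) by ring,
          Real.exp_nat_mul, hqdef, ← mul_pow]
        congr 2
        ring

open Nat in
lemma kapteyn_fiber (α : ℕ → ℂ) (z : ℂ) (k i : ℕ) (hik : i ≤ k) :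
    α (1 + i) * (Real.cos ((((k + 1) - (1 + i) : ℕ) : ℝ) * Real.pi / 2) : ℂ) *
        (((1 + i : ℕ)) : ℂ) ^ (k + 1) /
      (((((k + 1) - (1 + i))‼ : ℕ) : ℂ) * ((((k + 1) + (1 + i))‼ : ℕ) : ℂ)) * z ^ (k + 1) =
    (if i ≤ k ∧ (k - i) % 2 = 0 then
      α (i + 1) * ((-1 : ℂ) ^ ((k - i) / 2) /
        ((((k - i) / 2)! : ℂ) * (((i + 1 + (k - i) / 2)! : ℕ) : ℂ)) *
        ((((i + 1 : ℕ)) : ℂ) * z / 2) ^ (k + 1))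
    else 0) := by
  have h1 : (k + 1) - (1 + i) = k - i := by omega
  have h2 : (k + 1) + (1 + i) = k + i + 2 := by omega
  have h3 : (1 + i) = i + 1 := by omega
  rw [h1, h2, h3]
  rcases Nat.even_or_odd (k - i) with ⟨m, hm⟩ | ⟨m, hm⟩
  · have hcos : Real.cos (((k - i : ℕ) : ℝ) * Real.pi / 2) = (-1) ^ m := by
      rw [show ((k - i : ℕ) : ℝ) = 2 * (m : ℝ) by rw [hm]; push_cast; ring,
        show 2 * (m : ℝ) * Real.pi / 2 = (m : ℝ) * Real.pi by ring]
      simpa using Real.cos_nat_mul_pi_sub 0 m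
    rw [if_pos ⟨hik, by omega⟩, hcos, show (k - i) / 2 = m by omega,
      show k + i + 2 = 2 * (i + 1 + m) by omega, show k - i = 2 * m by omega,
      Nat.doubleFactorial_two_mul, Nat.doubleFactorial_two_mul]
    have hf1 : ((m ! : ℕ) : ℂ) ≠ 0 := by exact_mod_cast (Nat.factorial_pos m).ne'
    have hf2 : (((i + 1 + m)! : ℕ) : ℂ) ≠ 0 := by exact_mod_cast (Nat.factorial_pos _).ne'
    have h2c : (2 : ℂ) ≠ 0 := two_ne_zero
    have hk1 : k + 1 = m + (i + 1 + m) := by omega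
    rw [show ((((i + 1 : ℕ)) : ℂ) * z / 2) ^ (k + 1)
        = (((i + 1 : ℕ) : ℂ)) ^ (k + 1) * z ^ (k + 1) / 2 ^ (k + 1) by
      rw [div_pow, mul_pow]]
    push_cast
    rw [hk1]
    field_simp
    ring
  · have hcos : Real.cos (((k - i : ℕ) : ℝ) * Real.pi / 2) = 0 := by
      rw [show ((k - i : ℕ) : ℝ) = 2 * (m : ℝ) + 1 by rw [hm]; push_cast; ring,
        show (2 * (m : ℝ) + 1) * Real.pi / 2 = (m : ℝ) * Real.pi + Real.pi / 2 by ring,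
        Real.cos_add_pi_div_two, Real.sin_nat_mul_pi, neg_zero]
    rw [if_neg (by omega), hcos]
    simp

set_option maxHeartbeats 1000000 in
open Nat in
/-- If `|α_n| ≤ Mⁿ` and `a_k = ∑_{n=1}^k α_n cos((k−n)π/2) n^k / ((k−n)‼ (k+n)‼)`,
then for `|z| < 1/(eM)` the series `∑_{n≥1} α_n J_n(nz)` and `∑_{k≥1} a_k z^k`
are both summable and are equal. -/
theorem kapteyn_general_inversion (α : ℕ → ℂ) (M : ℝ) (hM : 1 ≤ M)
    (hα : ∀ n : ℕ, 1 ≤ n → ‖α n‖ ≤ M ^ n)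
    (a : ℕ → ℂ)
    (ha : ∀ k : ℕ, 1 ≤ k →
      a k = ∑ n ∈ Finset.Icc 1 k,
        α n * (Real.cos (((k - n : ℕ) : ℝ) * Real.pi / 2) : ℂ) * (n : ℂ) ^ k /
          (((k - n)‼ : ℂ) * ((k + n)‼ : ℂ)))
    (z : ℂ) (hz : ‖z‖ < 1 / (Real.exp 1 * M)) :
    Summable (fun n : ℕ => α (n + 1) * besselJ (n + 1) ((n + 1 : ℕ) * z)) ∧
    Summable (fun k : ℕ => a (k + 1) * z ^ (k + 1)) ∧
    ∑' n : ℕ, α (n + 1) * besselJ (n + 1) ((n + 1 : ℕ) * z) =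
      ∑' k : ℕ, a (k + 1) * z ^ (k + 1) := by
  obtain ⟨q, hqdef⟩ : ∃ q : ℝ,
      q = Real.exp 1 * M * ‖z‖ / 2 * Real.exp (‖z‖ ^ 2 / 2) := ⟨_, rfl⟩
  have hr0 : (0:ℝ) ≤ ‖z‖ := norm_nonneg z
  have hM0 : (0:ℝ) < M := lt_of_lt_of_le one_pos hM
  have he2 : (2:ℝ) ≤ Real.exp 1 := by nlinarith [Real.add_one_le_exp (1:ℝ)]
  have heM : (0:ℝ) < Real.exp 1 * M := by positivity
  have hzr : Real.exp 1 * M * ‖z‖ < 1 := by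
    rw [lt_div_iff₀ heM] at hz; linarith
  have hr1 : ‖z‖ < 1 := by nlinarith
  have hq0 : 0 ≤ q := by rw [hqdef]; positivity
  have hexp2 : Real.exp (‖z‖ ^ 2 / 2) < 2 := by
    have h1 : Real.exp (‖z‖ ^ 2 / 2) ≤ Real.exp (1 / 2) :=
      Real.exp_le_exp.mpr (by nlinarith)
    have h2 : Real.exp (1/2) * Real.exp (1/2) = Real.exp 1 := by
      rw [← Real.exp_add]; norm_num
    nlinarith [Real.exp_pos (1/2 : ℝ), Real.exp_one_lt_d9]
  have hq1 : q < 1 := by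
    rw [hqdef]
    have h3 : (0:ℝ) < Real.exp (‖z‖ ^ 2 / 2) := Real.exp_pos _
    nlinarith [mul_nonneg (mul_nonneg (Real.exp_pos 1).le hM0.le) hr0]
  -- the double series
  obtain ⟨F, hFdef⟩ : ∃ F : ℕ × ℕ → ℂ, F = fun p =>
      α (p.1 + 1) * ((-1 : ℂ) ^ p.2 / ((p.2 ! : ℂ) * (((p.1 + 1 + p.2)! : ℕ) : ℂ)) *
        ((((p.1 + 1 : ℕ)) : ℂ) * z / 2) ^ (p.1 + 1 + 2 * p.2)) := ⟨_, rfl⟩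
  have hbound : ∀ p : ℕ × ℕ, ‖F p‖ ≤ q ^ (p.1 + 1) * (1/2 : ℝ) ^ p.2 := by
    rintro ⟨n, j⟩
    rw [hFdef]
    exact kapteyn_norm_bound α M hM hα z q hqdef (n + 1) j (by omega)
  have hB1 : Summable fun n : ℕ => q ^ (n + 1) := by
    simpa [pow_succ] using (summable_geometric_of_lt_one hq0 hq1).mul_right q
  have hB2 : Summable fun j : ℕ => (1/2 : ℝ) ^ j :=
    summable_geometric_of_lt_one (by norm_num) (by norm_num)
  have hB : Summable fun p : ℕ × ℕ => q ^ (p.1 + 1) * (1/2 : ℝ) ^ p.2 :=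
    hB1.mul_of_nonneg hB2 (fun n => by positivity) (fun j => by positivity)
  have hF : Summable F := Summable.of_norm_bounded hB hbound
  -- LHS fibers
  have hLn : ∀ n : ℕ, HasSum (fun j => F (n, j))
      (α (n + 1) * besselJ (n + 1) ((n + 1 : ℕ) * z)) := by
    intro n
    have h1 := (hF.prod_factor n).hasSum
    have heq : α (n + 1) * besselJ (n + 1) ((n + 1 : ℕ) * z) = ∑' j, F (n, j) := by
      rw [besselJ, ← tsum_mul_left, hFdef]
    rw [heq]; exact h1
  have hL : HasSum (fun n : ℕ => α (n + 1) * besselJ (n + 1) ((n + 1 : ℕ) * z)) (∑' p, F p) :=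
    hF.hasSum.prod_fiberwise hLn
  -- regrouping
  obtain ⟨em, hemdef⟩ : ∃ em : ℕ × ℕ → ℕ × ℕ, em = fun p => (p.1 + 2 * p.2, p.1) := ⟨_, rfl⟩
  have hem : Function.Injective em := by
    rintro ⟨a1, a2⟩ ⟨b1, b2⟩ h
    simp only [hemdef, Prod.mk.injEq] at h
    obtain ⟨h1, h2⟩ := h
    simp only [Prod.mk.injEq]
    omega
  obtain ⟨G, hGdef⟩ : ∃ G : ℕ × ℕ → ℂ, G = fun p =>
      if p.2 ≤ p.1 ∧ (p.1 - p.2) % 2 = 0 then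
        α (p.2 + 1) * ((-1 : ℂ) ^ ((p.1 - p.2) / 2) /
          ((((p.1 - p.2) / 2)! : ℂ) * (((p.2 + 1 + (p.1 - p.2) / 2)! : ℕ) : ℂ)) *
          ((((p.2 + 1 : ℕ)) : ℂ) * z / 2) ^ (p.1 + 1))
      else 0 := ⟨_, rfl⟩
  have hGem : ∀ p : ℕ × ℕ, G (em p) = F p := by
    rintro ⟨n, j⟩
    have h1 : n + 2 * j - n = 2 * j := by omega
    have h2 : 2 * j / 2 = j := by omega
    simp only [hGdef, hFdef, hemdef]
    rw [if_pos ⟨by omega, by omega⟩]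
    rw [h1, h2, show n + 2 * j + 1 = n + 1 + 2 * j by omega]
  have hGsupp : ∀ x ∉ Set.range em, G x = 0 := by
    rintro ⟨k, m⟩ hx
    simp only [hGdef]
    by_cases hc : m ≤ k ∧ (k - m) % 2 = 0
    · exfalso
      apply hx
      refine ⟨(m, (k - m) / 2), ?_⟩
      rw [hemdef]
      simp only [Prod.mk.injEq]
      obtain ⟨hc1, hc2⟩ := hc
      exact ⟨by omega, by trivial⟩
    · exact if_neg hc
  have hGcomp : G ∘ em = F := funext hGem
  have hG : Summable G := (hem.summable_iff hGsupp).mp (hGcomp ▸ hF)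
  have htG : ∑' p, G p = ∑' p, F p := by
    rw [← hem.tsum_eq (Function.support_subset_iff'.mpr hGsupp)]
    exact tsum_congr hGem
  -- RHS fibers
  have hRk : ∀ k : ℕ, HasSum (fun m => G (k, m)) (a (k + 1) * z ^ (k + 1)) := by
    intro k
    have h0 : ∀ m ∉ Finset.range (k + 1), G (k, m) = 0 := by
      intro m hm
      simp only [Finset.mem_range] at hm
      rw [hGdef]
      exact if_neg (by omega)
    have h1 : HasSum (fun m => G (k, m)) _ := hasSum_sum_of_ne_finset_zero h0
    have h2 : a (k + 1) * z ^ (k + 1) = ∑ m ∈ Finset.range (k + 1), G (k, m) := by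
      rw [ha (k + 1) (by omega), Finset.sum_mul, ← Finset.Ico_add_one_right_eq_Icc,
        Finset.sum_Ico_eq_sum_range, show k + 1 + 1 - 1 = k + 1 from rfl]
      apply Finset.sum_congr rfl
      intro i hi
      simp only [Finset.mem_range] at hi
      rw [hGdef]
      exact kapteyn_fiber α z k i (by omega)
    rw [h2]; exact h1
  have hR : HasSum (fun k : ℕ => a (k + 1) * z ^ (k + 1)) (∑' p, G p) :=
    hG.hasSum.prod_fiberwise hRk
  exact ⟨hL.summable, hR.summable, by rw [hL.tsum_eq, hR.tsum_eq, htG]⟩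
end

section
/- Let t > 0 be real and let r > 0 satisfy t · r · exp(√(1 + r²)) / (1 + √(1 + r²)) = 1, where √ is the real square root. Then for every z ∈ ℂ with |z| < r, the Kapteyn series ∑_{n=1}^∞ t^n · J_n(n·z) is summable. -/
/-- The Kapteyn function `s ↦ s e^{√(1+s²)} / (1 + √(1+s²))`. -/
noncomputable def kapF (s : ℝ) : ℝ :=
  s * Real.exp (Real.sqrt (1 + s ^ 2)) / (1 + Real.sqrt (1 + s ^ 2))

lemma one_le_sqrt_one_add_sq (s : ℝ) : 1 ≤ Real.sqrt (1 + s ^ 2) := by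
  nlinarith [Real.sq_sqrt (show (0:ℝ) ≤ 1 + s ^ 2 by positivity),
    Real.sqrt_nonneg (1 + s ^ 2), sq_nonneg s]

lemma kapF_nonneg {s : ℝ} (hs : 0 ≤ s) : 0 ≤ kapF s := by
  have h := one_le_sqrt_one_add_sq s
  unfold kapF
  positivity

lemma kapF_strictMono {s r : ℝ} (hs : 0 ≤ s) (hsr : s < r) : kapF s < kapF r := by
  have hus := one_le_sqrt_one_add_sq s
  have hur := one_le_sqrt_one_add_sq r
  set us := Real.sqrt (1 + s ^ 2) with hus_def
  set ur := Real.sqrt (1 + r ^ 2) with hur_def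
  have husur : us ≤ ur := Real.sqrt_le_sqrt (by nlinarith)
  have hfrac : s / (1 + us) < r / (1 + ur) := by
    rw [div_lt_div_iff₀ (by linarith) (by linarith)]
    have h1 : (s * ur) ^ 2 ≤ (r * us) ^ 2 := by
      have hs2 : us ^ 2 = 1 + s ^ 2 := Real.sq_sqrt (by positivity)
      have hr2 : ur ^ 2 = 1 + r ^ 2 := Real.sq_sqrt (by positivity)
      nlinarith
    have hr0 : 0 ≤ r := hs.trans hsr.le
    have h2 : s * ur ≤ r * us := by
      nlinarith [mul_nonneg hs (by linarith : (0:ℝ) ≤ ur),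
        mul_nonneg hr0 (by linarith : (0:ℝ) ≤ us)]
    nlinarith
  have hexp : Real.exp us ≤ Real.exp ur := Real.exp_le_exp.2 husur
  have hks : kapF s = s / (1 + us) * Real.exp us := by
    unfold kapF; rw [div_mul_eq_mul_div]
  have hkr : kapF r = r / (1 + ur) * Real.exp ur := by
    unfold kapF; rw [div_mul_eq_mul_div]
  rw [hks, hkr]
  calc s / (1 + us) * Real.exp us < r / (1 + ur) * Real.exp us := by
        apply mul_lt_mul_of_pos_right hfrac (Real.exp_pos _)
    _ ≤ r / (1 + ur) * Real.exp ur := by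
        apply mul_le_mul_of_nonneg_left hexp
        exact div_nonneg (hs.trans hsr.le) (by linarith)

lemma kapteyn_aux_id (N j : ℕ) (s v nn f1 f2 : ℝ) (hv : v ≠ 0) (hf1 : f1 ≠ 0) (hf2 : f2 ≠ 0) :
    (nn * s / 2) ^ (N + 2 * j) / (f1 * f2) =
      (s / v) ^ N * ((nn * v / 2) ^ (N + j) / f2 * ((nn * s ^ 2 / (2 * v)) ^ j / f1)) := by
  simp only [div_pow, mul_pow, pow_add]
  field_simp
  ring

lemma real_exp_eq_tsum (x : ℝ) : Real.exp x = ∑' n : ℕ, x ^ n / n.factorial := by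
  rw [Real.exp_eq_exp_ℝ, NormedSpace.exp_eq_tsum_div]

lemma pow_div_factorial_le_exp {x : ℝ} (hx : 0 ≤ x) (j : ℕ) :
    x ^ j / j.factorial ≤ Real.exp x := by
  rw [real_exp_eq_tsum]
  exact Summable.le_tsum (Real.summable_pow_div_factorial x) j (fun k _ => by positivity)

lemma besselJ_term_norm (n j : ℕ) (w : ℂ) :
    ‖((-1 : ℂ) ^ j / ((Nat.factorial j : ℂ) * (Nat.factorial (n + j) : ℂ))) *
        (w / 2) ^ (n + 2 * j)‖ =
      (‖w‖ / 2) ^ (n + 2 * j) /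
        ((Nat.factorial j : ℝ) * (Nat.factorial (n + j) : ℝ)) := by
  rw [norm_mul, norm_div, norm_pow, norm_neg, norm_one, one_pow, norm_mul, norm_pow, norm_div]
  simp [Complex.norm_natCast, Complex.norm_def]
  ring

/-- Summability of the (absolute values of the) Bessel series terms. -/
lemma besselJ_norm_summable (n : ℕ) (w : ℂ) :
    Summable (fun j : ℕ =>
      ‖((-1 : ℂ) ^ j / ((Nat.factorial j : ℂ) * (Nat.factorial (n + j) : ℂ))) *
        (w / 2) ^ (n + 2 * j)‖) := by
  set c := ‖w‖ / 2 with hc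
  have hc0 : 0 ≤ c := by positivity
  have hsum : Summable (fun j : ℕ => c ^ n * ((c ^ 2) ^ j / (Nat.factorial j : ℝ))) :=
    (Real.summable_pow_div_factorial (c ^ 2)).mul_left (c ^ n)
  refine Summable.of_nonneg_of_le (fun j => norm_nonneg _) (fun j => ?_) hsum
  rw [besselJ_term_norm, ← hc]
  have h1 : (1 : ℝ) ≤ (Nat.factorial (n + j) : ℝ) := by
    exact_mod_cast Nat.one_le_iff_ne_zero.2 (Nat.factorial_ne_zero (n + j))
  have h2 : (0 : ℝ) < (Nat.factorial j : ℝ) := by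
    exact_mod_cast Nat.factorial_pos j
  have key : c ^ (n + 2 * j) = c ^ n * (c ^ 2) ^ j := by
    rw [pow_add, pow_mul]
  rw [key, mul_div_assoc']
  exact div_le_div_of_nonneg_left (by positivity) h2
    (le_mul_of_one_le_right h2.le h1)

/-- The key bound: `|J_n(n z)| ≤ kapF(|z|)ⁿ` for `n ≥ 1`. -/
lemma norm_besselJ_le_s18 (n : ℕ) (hn : 1 ≤ n) (z : ℂ) :
    ‖besselJ n ((n : ℂ) * z)‖ ≤ kapF (‖z‖) ^ n := by
  rcases eq_or_lt_of_le (norm_nonneg z) with h0 | hs0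
  · -- z = 0
    have hz0 : z = 0 := by
      have := h0.symm
      rwa [norm_eq_zero] at this
    subst hz0
    have hJ : besselJ n ((n : ℂ) * 0) = 0 := by
      unfold besselJ
      rw [mul_zero]
      rw [show (0 : ℂ) / 2 = 0 by ring]
      convert tsum_zero with j
      rw [zero_pow (by omega), mul_zero]
    rw [hJ, norm_zero]
    exact pow_nonneg (kapF_nonneg (le_refl 0)) n
  -- main case : |z| > 0
  set s := ‖z‖ with hs_def
  set u := Real.sqrt (1 + s ^ 2) with hu_def
  have hu1 : 1 ≤ u := one_le_sqrt_one_add_sq s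
  have hu2 : u ^ 2 = 1 + s ^ 2 := Real.sq_sqrt (by positivity)
  have h1u : (0 : ℝ) < 1 + u := by linarith
  set x := (n : ℝ) * (1 + u) / 2 with hx_def
  set y := (n : ℝ) * s ^ 2 / (2 * (1 + u)) with hy_def
  have hx0 : 0 ≤ x := by positivity
  have hy0 : 0 ≤ y := by positivity
  have hxy : x + y = (n : ℝ) * u := by
    rw [hx_def, hy_def]
    field_simp
    nlinarith [hu2]
  have hw : ‖(n : ℂ) * z‖ = (n : ℝ) * s := by
    rw [norm_mul, Complex.norm_natCast]
  -- the termwise identity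
  have hid : ∀ j : ℕ,
      ((n : ℝ) * s / 2) ^ (n + 2 * j) /
          ((Nat.factorial j : ℝ) * (Nat.factorial (n + j) : ℝ)) =
        (s / (1 + u)) ^ n *
          (x ^ (n + j) / (Nat.factorial (n + j) : ℝ) * (y ^ j / (Nat.factorial j : ℝ))) := by
    intro j
    have hfj : ((Nat.factorial j : ℝ)) ≠ 0 := by
      exact_mod_cast (Nat.factorial_ne_zero j)
    have hfnj : ((Nat.factorial (n + j) : ℝ)) ≠ 0 := by
      exact_mod_cast (Nat.factorial_ne_zero (n + j))
    rw [hx_def, hy_def]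
    exact kapteyn_aux_id n j s (1 + u) (n : ℝ) _ _ (ne_of_gt h1u) hfj hfnj
  have hsum1 : Summable (fun j : ℕ => x ^ (n + j) / (Nat.factorial (n + j) : ℝ)) :=
    (Real.summable_pow_div_factorial x).comp_injective (add_right_injective n)
  have hsum2 : Summable
      (fun j : ℕ => x ^ (n + j) / (Nat.factorial (n + j) : ℝ) * (y ^ j / (Nat.factorial j : ℝ))) := by
    refine Summable.of_nonneg_of_le (fun j => by positivity) (fun j => ?_)
      (hsum1.mul_right (Real.exp y))
    exact mul_le_mul_of_nonneg_left (pow_div_factorial_le_exp hy0 j) (by positivity)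
  have htail : ∑' j : ℕ, x ^ (n + j) / (Nat.factorial (n + j) : ℝ) ≤ Real.exp x := by
    rw [real_exp_eq_tsum]
    exact Summable.tsum_le_tsum_of_inj (fun j => n + j) (add_right_injective n)
      (fun c _ => by positivity) (fun j => le_rfl) hsum1
      (Real.summable_pow_div_factorial x)
  have hinner : ∑' j : ℕ,
      x ^ (n + j) / (Nat.factorial (n + j) : ℝ) * (y ^ j / (Nat.factorial j : ℝ)) ≤
        Real.exp x * Real.exp y := by
    calc ∑' j : ℕ, x ^ (n + j) / (Nat.factorial (n + j) : ℝ) * (y ^ j / (Nat.factorial j : ℝ))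
        ≤ ∑' j : ℕ, x ^ (n + j) / (Nat.factorial (n + j) : ℝ) * Real.exp y := by
          refine Summable.tsum_le_tsum (fun j => ?_) hsum2 (hsum1.mul_right (Real.exp y))
          exact mul_le_mul_of_nonneg_left (pow_div_factorial_le_exp hy0 j) (by positivity)
      _ = (∑' j : ℕ, x ^ (n + j) / (Nat.factorial (n + j) : ℝ)) * Real.exp y := by
          rw [tsum_mul_right]
      _ ≤ Real.exp x * Real.exp y :=
          mul_le_mul_of_nonneg_right htail (Real.exp_pos y).le
  calc ‖besselJ n ((n : ℂ) * z)‖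
      ≤ ∑' j : ℕ, ‖((-1 : ℂ) ^ j / ((Nat.factorial j : ℂ) * (Nat.factorial (n + j) : ℂ))) *
          (((n : ℂ) * z) / 2) ^ (n + 2 * j)‖ :=
        norm_tsum_le_tsum_norm (besselJ_norm_summable n ((n : ℂ) * z))
    _ = ∑' j : ℕ, (s / (1 + u)) ^ n *
          (x ^ (n + j) / (Nat.factorial (n + j) : ℝ) * (y ^ j / (Nat.factorial j : ℝ))) := by
        refine tsum_congr fun j => ?_
        rw [besselJ_term_norm, hw, hid j]
    _ = (s / (1 + u)) ^ n * ∑' j : ℕ,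
          (x ^ (n + j) / (Nat.factorial (n + j) : ℝ) * (y ^ j / (Nat.factorial j : ℝ))) := by
        rw [tsum_mul_left]
    _ ≤ (s / (1 + u)) ^ n * (Real.exp x * Real.exp y) := by
        exact mul_le_mul_of_nonneg_left hinner (by positivity)
    _ = kapF s ^ n := by
        rw [← Real.exp_add, hxy, Real.exp_nat_mul]
        rw [← mul_pow]
        unfold kapF
        rw [← hu_def]
        congr 1
        field_simp

/-- If `t > 0` and `r > 0` satisfies `t r e^{√(1+r²)} / (1 + √(1+r²)) = 1`, then the
Kapteyn series `∑_{n≥1} tⁿ J_n(nz)` is summable for every `|z| < r`. -/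
theorem kapteyn_summable_in_disc (t : ℝ) (ht : 0 < t) (r : ℝ) (hr : 0 < r)
    (hroot : t * r * Real.exp (Real.sqrt (1 + r ^ 2)) / (1 + Real.sqrt (1 + r ^ 2)) = 1)
    (z : ℂ) (hz : ‖z‖ < r) :
    Summable (fun n : ℕ => (t : ℂ) ^ (n + 1) * besselJ (n + 1) ((n + 1 : ℕ) * z)) := by
  set s := ‖z‖ with hs_def
  have hs0 : 0 ≤ s := norm_nonneg z
  set q := t * kapF s with hq_def
  have hq0 : 0 ≤ q := mul_nonneg ht.le (kapF_nonneg hs0)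
  have hq1 : q < 1 := by
    have h1 : t * kapF r = 1 := by
      rw [← hroot]; unfold kapF; ring
    have := kapF_strictMono hs0 hz
    calc q = t * kapF s := rfl
      _ < t * kapF r := by exact mul_lt_mul_of_pos_left this ht
      _ = 1 := h1
  have hgeom : Summable (fun n : ℕ => q ^ (n + 1)) := by
    simpa [pow_succ'] using (summable_geometric_of_lt_one hq0 hq1).mul_left q
  apply Summable.of_norm_bounded hgeom
  intro n
  have hb := norm_besselJ_le_s18 (n + 1) (Nat.le_add_left 1 n) z
  calc ‖(t : ℂ) ^ (n + 1) * besselJ (n + 1) ((n + 1 : ℕ) * z)‖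
      = t ^ (n + 1) * ‖besselJ (n + 1) ((n + 1 : ℕ) * z)‖ := by
        rw [norm_mul, norm_pow, Complex.norm_real, Real.norm_of_nonneg ht.le]
    _ ≤ t ^ (n + 1) * kapF s ^ (n + 1) := by
        apply mul_le_mul_of_nonneg_left _ (by positivity)
        simpa using hb
    _ = q ^ (n + 1) := by rw [hq_def, mul_pow]
end
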